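/- If γ : [a,b] → ℂ is a piecewise C¹ curve whose image is contained in ℂ ∖ ({0} ∪ {iy : y > 0}), then Ind(γ) < 1. -/

import Mathlib

open Complex Filter Set Topology

noncomputable section

/-- `γ` is a piecewise `C¹` curve on `[a,b]`: it is continuous on `[a,b]` and there is a
finite partition `a = t₀ < t₁ < ⋯ < tₙ = b` on each closed subinterval of which `γ` is `C¹`. -/
def PiecewiseC1On (γ : ℝ → ℂ) (a b : ℝ) : Prop :=
  ContinuousOn γ (Set.Icc a b) ∧
    ∃ (n : ℕ) (t : Fin (n + 1) → ℝ),
      t 0 = a ∧ t (Fin.last n) = b ∧ StrictMono t ∧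
        ∀ i : Fin n, ContDiffOn ℝ 1 γ (Set.Icc (t i.castSucc) (t i.succ))

/-- The index (real winding number) of the curve `γ : [a,b] → ℂ∖{0}` with respect to `0`. -/
def indexAlong (γ : ℝ → ℂ) (a b : ℝ) : ℝ :=
  (1 / (2 * Real.pi * Complex.I) * ∫ t in a..b, deriv γ t / γ t).re

lemma mul_I_mem_slitPlane {z : ℂ} (h1 : z ≠ 0) (h2 : ¬(z.re = 0 ∧ 0 < z.im)) :
    Complex.I * z ∈ Complex.slitPlane := by
  rw [Complex.mem_slitPlane_iff]
  simp only [Complex.mul_re, Complex.mul_im, Complex.I_re, Complex.I_im]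
  push_neg at h2
  by_cases hre : z.re = 0
  · left
    have him : z.im ≠ 0 := by
      intro h; exact h1 (Complex.ext hre h)
    have := h2 hre
    nlinarith [lt_of_le_of_ne this him]
  · right; simpa using hre

/-- FTC on a single `C¹` piece. -/
lemma piece_integral (γ : ℝ → ℂ) (c d : ℝ) (hcd : c < d) (h : ContDiffOn ℝ 1 γ (Set.Icc c d))
    (hs : ∀ t ∈ Set.Icc c d, Complex.I * γ t ∈ Complex.slitPlane) :
    IntervalIntegrable (fun t => deriv γ t / γ t) MeasureTheory.volume c d ∧
    ∫ t in c..d, deriv γ t / γ t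
      = Complex.log (Complex.I * γ d) - Complex.log (Complex.I * γ c) := by
  have hne : ∀ t ∈ Set.Icc c d, γ t ≠ 0 := by
    intro t ht h0
    have := Complex.slitPlane_ne_zero (hs t ht)
    simp [h0] at this
  -- derivWithin is continuous on the piece
  have hud : UniqueDiffOn ℝ (Set.Icc c d) := uniqueDiffOn_Icc hcd
  have hg : ContinuousOn (fun t => derivWithin γ (Set.Icc c d) t / γ t) (Set.Icc c d) := by
    exact (h.continuousOn_derivWithin hud le_rfl).div h.continuousOn hne
  -- a.e. equality on Ioo
  have heq : ∀ t ∈ Set.Ioo c d,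
      deriv γ t / γ t = derivWithin γ (Set.Icc c d) t / γ t := by
    intro t ht
    rw [derivWithin_of_mem_nhds (Icc_mem_nhds ht.1 ht.2)]
  have hint : IntervalIntegrable (fun t => deriv γ t / γ t) MeasureTheory.volume c d := by
    rw [intervalIntegrable_iff_integrableOn_Ioo_of_le hcd.le]
    have : MeasureTheory.IntegrableOn (fun t => derivWithin γ (Set.Icc c d) t / γ t)
        (Set.Ioo c d) := hg.integrableOn_Icc.mono_set Ioo_subset_Icc_self
    exact this.congr_fun (fun t ht => (heq t ht).symm) measurableSet_Ioo
  refine ⟨hint, ?_⟩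
  -- FTC
  have hcont : ContinuousOn (fun t => Complex.log (Complex.I * γ t)) (Set.Icc c d) := by
    intro t ht
    exact (continuousAt_clog (hs t ht)).tendsto.comp
      ((h.continuousOn t ht).const_mul Complex.I)
  have hderiv : ∀ t ∈ Set.Ioo c d,
      HasDerivWithinAt (fun t => Complex.log (Complex.I * γ t))
        (deriv γ t / γ t) (Set.Ioi t) t := by
    intro t ht
    have hγd : HasDerivAt γ (deriv γ t) t := by
      have := (h.contDiffAt (Icc_mem_nhds ht.1 ht.2)).differentiableAt one_ne_zero
      exact this.hasDerivAt
    have hI : HasDerivAt (fun s => Complex.I * γ s) (Complex.I * deriv γ t) t :=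
      hγd.const_mul _
    have := HasDerivAt.clog_real hI (hs t (Ioo_subset_Icc_self ht))
    have h2 : Complex.I * deriv γ t / (Complex.I * γ t) = deriv γ t / γ t := by
      rw [mul_div_mul_left _ _ Complex.I_ne_zero]
    rw [h2] at this
    exact this.hasDerivWithinAt
  exact intervalIntegral.integral_eq_sub_of_hasDeriv_right_of_le hcd.le hcont hderiv hint

/-- A piecewise `C¹` curve with image in `ℂ ∖ ({0} ∪ {iy : y > 0})` has index less than `1`. -/
theorem indexAlong_lt_one (γ : ℝ → ℂ) (a b : ℝ) (hab : a ≤ b)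
    (hγ : PiecewiseC1On γ a b)
    (him : ∀ t ∈ Set.Icc a b, γ t ≠ 0 ∧ ¬((γ t).re = 0 ∧ 0 < (γ t).im)) :
    indexAlong γ a b < 1 := by
  obtain ⟨hcont, n, t, ht0, htn, hmono, hpiece⟩ := hγ
  have hs : ∀ s ∈ Set.Icc a b, Complex.I * γ s ∈ Complex.slitPlane := fun s hsmem =>
    mul_I_mem_slitPlane (him s hsmem).1 (him s hsmem).2
  -- the partition points as a ℕ-indexed sequence
  set u : ℕ → ℝ := fun k => t ⟨min k n, Nat.lt_succ_of_le (min_le_right _ _)⟩ with hu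
  have hu0 : u 0 = a := by simpa [hu] using ht0
  have hun : u n = b := by
    have : (⟨min n n, Nat.lt_succ_of_le (min_le_right _ _)⟩ : Fin (n+1)) = Fin.last n := by
      ext; simp
    simp only [hu, this, htn]
  have hrange : ∀ i : Fin (n+1), t i ∈ Set.Icc a b := by
    intro i
    constructor
    · rw [← ht0]; exact hmono.monotone (Fin.zero_le i)
    · rw [← htn]; exact hmono.monotone (Fin.le_last i)
  have hpieces : ∀ k < n,
      IntervalIntegrable (fun s => deriv γ s / γ s) MeasureTheory.volume (u k) (u (k+1)) ∧
      ∫ s in u k..u (k+1), deriv γ s / γ s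
        = Complex.log (Complex.I * γ (u (k+1))) - Complex.log (Complex.I * γ (u k)) := by
    intro k hk
    have hk1 : (⟨min k n, Nat.lt_succ_of_le (min_le_right _ _)⟩ : Fin (n+1))
        = (⟨k, hk⟩ : Fin n).castSucc := by ext; simp [Nat.le_of_lt hk, min_eq_left]
    have hk2 : (⟨min (k+1) n, Nat.lt_succ_of_le (min_le_right _ _)⟩ : Fin (n+1))
        = (⟨k, hk⟩ : Fin n).succ := by ext; simp; omega
    have huk : u k = t ((⟨k, hk⟩ : Fin n).castSucc) := by rw [hu]; exact congrArg t hk1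
    have huk1 : u (k+1) = t ((⟨k, hk⟩ : Fin n).succ) := by rw [hu]; exact congrArg t hk2
    rw [huk, huk1]
    have hlt : t ((⟨k, hk⟩ : Fin n).castSucc) < t ((⟨k, hk⟩ : Fin n).succ) :=
      hmono (by simp [Fin.lt_def])
    refine piece_integral γ _ _ hlt (hpiece _) ?_
    intro s hsmem
    exact hs s ⟨le_trans (hrange _).1 hsmem.1, le_trans hsmem.2 (hrange _).2⟩
  have hintsum : ∫ s in a..b, deriv γ s / γ s
      = Complex.log (Complex.I * γ b) - Complex.log (Complex.I * γ a) := by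
    rw [← hu0, ← hun]
    rw [← intervalIntegral.sum_integral_adjacent_intervals
      (fun k hk => (hpieces k hk).1)]
    rw [Finset.sum_congr rfl (fun k hk => (hpieces k (Finset.mem_range.mp hk)).2)]
    exact Finset.sum_range_sub (fun k => Complex.log (Complex.I * γ (u k))) n
  -- compute the real part
  have hπ : (0:ℝ) < Real.pi := Real.pi_pos
  have hmem_a : a ∈ Set.Icc a b := ⟨le_refl a, hab⟩
  have hmem_b : b ∈ Set.Icc a b := ⟨hab, le_refl b⟩
  have harg : ∀ s ∈ Set.Icc a b,
      -Real.pi < Complex.arg (Complex.I * γ s) ∧ Complex.arg (Complex.I * γ s) < Real.pi := by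
    intro s hsmem
    refine ⟨Complex.neg_pi_lt_arg _, lt_of_le_of_ne (Complex.arg_le_pi _) ?_⟩
    intro hpi
    rcases Complex.arg_eq_pi_iff.mp hpi with ⟨hre, himz⟩
    rcases Complex.mem_slitPlane_iff.mp (hs s hsmem) with h | h
    · linarith
    · exact h himz
  rw [indexAlong, hintsum]
  have hre : (1 / (2 * Real.pi * Complex.I) *
      (Complex.log (Complex.I * γ b) - Complex.log (Complex.I * γ a))).re
      = ((Complex.log (Complex.I * γ b)).im - (Complex.log (Complex.I * γ a)).im)
        / (2 * Real.pi) := by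
    set w := Complex.log (Complex.I * γ b) - Complex.log (Complex.I * γ a) with hw
    have hπc : (Real.pi:ℂ) ≠ 0 := by simp [Complex.ofReal_ne_zero, hπ.ne']
    have h1 : 1 / (2 * (Real.pi:ℂ) * Complex.I) = -Complex.I / (2 * Real.pi) := by
      rw [div_eq_div_iff (by simp [Complex.I_ne_zero, hπc]) (by simp [hπc])]
      ring_nf
      simp [Complex.I_sq]
    rw [h1]
    rw [div_mul_eq_mul_div]
    rw [Complex.div_re]
    have him2 : ((2:ℂ) * Real.pi).im = 0 := by simp
    have hre2 : ((2:ℂ) * Real.pi).re = 2 * Real.pi := by simp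
    rw [Complex.normSq_apply, him2, hre2]
    have : (-Complex.I * w).re = w.im := by simp
    rw [this]
    have hwim : w.im = (Complex.log (Complex.I * γ b)).im
        - (Complex.log (Complex.I * γ a)).im := by simp [hw]
    rw [hwim]
    field_simp
    ring
  rw [hre]
  rw [div_lt_one (by linarith)]
  have hA := harg a hmem_a
  have hB := harg b hmem_b
  rw [Complex.log_im, Complex.log_im]
  linarith [hA.1, hB.2]
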